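/- For any nonempty index k = (k_1,…,k_r) of positive integers and any positive integer N, Hoffman's duality identity ζ^⋆_{<N}(k^∨) = H_{<N}(k) holds, where k^∨ is the Hoffman dual of k. -/

import Mathlib

/-- Auxiliary recursion: `zetaStarAux M t` sums over `0 < m₁ ≤ ⋯ ≤ m_r < M` where the
exponent list `t` lists the exponents from the *largest* variable downwards. -/
def zetaStarAux : ℕ → List ℕ → ℚ
  | _, [] => 1
  | M, k :: t => ∑ m ∈ Finset.Ioo 0 M, (1 / (m : ℚ) ^ k) * zetaStarAux (m + 1) t

/-- The multiple star harmonic sum `ζ⋆_{<N}(k₁,…,k_r) = ∑_{0<m₁≤⋯≤m_r<N} ∏ᵢ 1/mᵢ^{kᵢ}`. -/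
def zetaStar (N : ℕ) (ks : List ℕ) : ℚ := zetaStarAux N ks.reverse

/-- The multiple sum of Hoffman's type
`H_{<N}(k₁,…,k_r) = ∑_{1≤m₁≤⋯≤m_r<N} ((-1)^{m_r-1}/(m₁^{k₁}⋯m_r^{k_r}))·binom(N-1,m_r)`. -/
def hoffmanSum (N : ℕ) (ks : List ℕ) : ℚ :=
  match ks.reverse with
  | [] => 1
  | k :: t => ∑ m ∈ Finset.Ioo 0 N,
      ((-1 : ℚ) ^ (m - 1) * ((N - 1).choose m : ℚ) / (m : ℚ) ^ k) * zetaStarAux (m + 1) t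

/-- The Hoffman dual `k^∨` of an index `k`: write `k = (1+⋯+1, …, 1+⋯+1)` (with `kᵢ` ones
in the `i`-th group), i.e. encode `k` as a word in `{+, ,}` of length `(weight) - 1`
(`true` = `+`), and exchange the plus signs and the commas. -/
def hoffmanDual (ks : List ℕ) : List ℕ :=
  ((List.intercalate [false] (ks.map fun a => List.replicate (a - 1) true)).map not).splitOn false
    |>.map fun b => b.length + 1

open Finset

/-- inner summand function for a word (head = outermost symbol). -/
def psiW : List Bool → ℕ → ℚ
  | [], m => 1 / m
  | true :: w, m => psiW w m / m
  | false :: w, m => (∑ n ∈ Finset.Icc 1 m, psiW w n) / m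

def altS (h : ℕ → ℚ) (M : ℕ) : ℚ :=
  ∑ m ∈ Finset.Icc 1 M, (-1 : ℚ) ^ (m - 1) * (M.choose m : ℚ) * h m

def plainS (h : ℕ → ℚ) (M : ℕ) : ℚ := ∑ m ∈ Finset.Icc 1 M, h m

lemma choose_ratio (M m : ℕ) (hm : 1 ≤ m) :
    (M : ℚ) * ((M - 1).choose (m - 1) : ℚ) = (m : ℚ) * (M.choose m : ℚ) := by
  obtain ⟨m', rfl⟩ : ∃ m', m = m' + 1 := ⟨m - 1, by omega⟩
  cases M with
  | zero => simp [Nat.choose_eq_zero_of_lt (by omega : (0:ℕ) < m' + 1)]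
  | succ M' =>
      have h : ((M' + 1) * M'.choose m' : ℕ) = ((m' + 1) * (M' + 1).choose (m' + 1) : ℕ) := by
        rw [Nat.add_one_mul_choose_eq]; ring
      simp only [Nat.add_sub_cancel]
      exact_mod_cast h

lemma pascal_sub (M m : ℕ) (hm : 1 ≤ m) (hM : 1 ≤ M) :
    (M.choose m : ℚ) - ((M - 1).choose m : ℚ) = ((M - 1).choose (m - 1) : ℚ) := by
  obtain ⟨m', rfl⟩ : ∃ m', m = m' + 1 := ⟨m - 1, by omega⟩
  obtain ⟨M', rfl⟩ : ∃ M', M = M' + 1 := ⟨M - 1, by omega⟩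
  simp only [Nat.add_sub_cancel, Nat.choose_succ_succ]
  push_cast
  ring

/-- difference of consecutive alternating binomial sums -/
lemma diff_alt (h : ℕ → ℚ) (M : ℕ) (hM : 1 ≤ M) :
    altS h M - altS h (M - 1) =
      (1 / M) * ∑ m ∈ Finset.Icc 1 M, (-1 : ℚ) ^ (m - 1) * (M.choose m : ℚ) * ((m : ℚ) * h m) := by
  have h1 : altS h (M - 1) =
      ∑ m ∈ Finset.Icc 1 M, (-1 : ℚ) ^ (m - 1) * (((M - 1).choose m : ℚ)) * h m := by
    rw [altS]
    obtain ⟨M', rfl⟩ : ∃ M', M = M' + 1 := ⟨M - 1, by omega⟩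
    simp only [Nat.add_sub_cancel]
    rw [Finset.sum_Icc_succ_top (by omega)]
    simp [Nat.choose_eq_zero_of_lt (by omega : M' < M' + 1)]
  rw [altS, h1, ← Finset.sum_sub_distrib, Finset.mul_sum]
  refine Finset.sum_congr rfl fun m hm => ?_
  simp only [Finset.mem_Icc] at hm
  have h2 := pascal_sub M m hm.1 hM
  have h3 := choose_ratio M m hm.1
  have hMne : (M : ℚ) ≠ 0 := by
    have : (0:ℕ) < M := hM
    exact_mod_cast this.ne'
  have h4 : ((M - 1).choose (m - 1) : ℚ) = (m : ℚ) * (M.choose m : ℚ) / M := by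
    rw [← h3]; field_simp
  calc (-1:ℚ) ^ (m - 1) * (M.choose m : ℚ) * h m - (-1) ^ (m - 1) * ((M - 1).choose m : ℚ) * h m
      = (-1) ^ (m - 1) * ((M.choose m : ℚ) - ((M - 1).choose m : ℚ)) * h m := by ring
    _ = (-1) ^ (m - 1) * ((M - 1).choose (m - 1) : ℚ) * h m := by rw [h2]
    _ = 1 / M * ((-1) ^ (m - 1) * (M.choose m : ℚ) * ((m : ℚ) * h m)) := by
        rw [h4]; field_simp
lemma alt_partial (M : ℕ) (hM : 1 ≤ M) (n : ℕ) :
    ∑ m ∈ Finset.range (n + 1), (-1 : ℚ) ^ m * (M.choose m : ℚ)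
      = (-1) ^ n * ((M - 1).choose n : ℚ) := by
  induction n with
  | zero => simp
  | succ n ih =>
      rw [Finset.sum_range_succ, ih]
      obtain ⟨M', rfl⟩ : ∃ M', M = M' + 1 := ⟨M - 1, by omega⟩
      simp only [Nat.add_sub_cancel, Nat.choose_succ_succ]
      push_cast
      ring

lemma alt_tail (M n : ℕ) (hn : 1 ≤ n) (hnM : n ≤ M) :
    ∑ m ∈ Finset.Icc n M, (-1 : ℚ) ^ (m - 1) * (M.choose m : ℚ)
      = (-1) ^ (n - 1) * ((M - 1).choose (n - 1) : ℚ) := by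
  have hM : 1 ≤ M := le_trans hn hnM
  have key : ∀ m ∈ Finset.Icc n M, (-1 : ℚ) ^ (m - 1) * (M.choose m : ℚ)
      = -((-1) ^ m * (M.choose m : ℚ)) := by
    intro m hm
    simp only [Finset.mem_Icc] at hm
    obtain ⟨m', rfl⟩ : ∃ m', m = m' + 1 := ⟨m - 1, by omega⟩
    simp only [Nat.add_sub_cancel, pow_succ]
    ring
  rw [Finset.sum_congr rfl key, Finset.sum_neg_distrib]
  have split : ∑ m ∈ Finset.range n, (-1 : ℚ) ^ m * (M.choose m : ℚ)
      + ∑ m ∈ Finset.Icc n M, (-1 : ℚ) ^ m * (M.choose m : ℚ)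
      = ∑ m ∈ Finset.range (M + 1), (-1 : ℚ) ^ m * (M.choose m : ℚ) := by
    rw [Finset.range_eq_Ico, Finset.range_eq_Ico]
    have : Finset.Icc n M = Finset.Ico n (M + 1) := by
      ext x; simp [Finset.mem_Icc, Finset.mem_Ico]
    rw [this]
    exact Finset.sum_Ico_consecutive (fun m => (-1 : ℚ) ^ m * (M.choose m : ℚ)) (Nat.zero_le n) (by omega : n ≤ M + 1)
  have total : ∑ m ∈ Finset.range (M + 1), (-1 : ℚ) ^ m * (M.choose m : ℚ) = 0 := by
    rw [alt_partial M hM M]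
    simp [Nat.choose_eq_zero_of_lt (by omega : M - 1 < M)]
  have head : ∑ m ∈ Finset.range n, (-1 : ℚ) ^ m * (M.choose m : ℚ)
      = (-1) ^ (n - 1) * ((M - 1).choose (n - 1) : ℚ) := by
    obtain ⟨n', rfl⟩ : ∃ n', n = n' + 1 := ⟨n - 1, by omega⟩
    simpa using alt_partial M hM n'
  have : ∑ m ∈ Finset.Icc n M, (-1 : ℚ) ^ m * (M.choose m : ℚ)
      = -((-1) ^ (n - 1) * ((M - 1).choose (n - 1) : ℚ)) := by
    rw [← head]; linarith [split, total]
  rw [this]; ring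

def IsDual (f g : ℕ → ℚ) : Prop := ∀ M, altS f M = plainS g M

lemma plainS_succ (g : ℕ → ℚ) (M : ℕ) : plainS g (M + 1) = plainS g M + g (M + 1) := by
  rw [plainS, plainS, Finset.sum_Icc_succ_top (by omega)]

lemma isDual_diff {f g : ℕ → ℚ} (hd : IsDual f g) (M : ℕ) (hM : 1 ≤ M) :
    ∑ m ∈ Finset.Icc 1 M, (-1 : ℚ) ^ (m - 1) * ((M - 1).choose (m - 1) : ℚ) * f m = g M := by
  have h1 : altS f M - altS f (M - 1) = g M := by
    rw [hd, hd]
    obtain ⟨M', rfl⟩ : ∃ M', M = M' + 1 := ⟨M - 1, by omega⟩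
    simp only [Nat.add_sub_cancel]
    rw [plainS_succ]; ring
  have h2 : altS f (M - 1) =
      ∑ m ∈ Finset.Icc 1 M, (-1 : ℚ) ^ (m - 1) * (((M - 1).choose m : ℚ)) * f m := by
    rw [altS]
    obtain ⟨M', rfl⟩ : ∃ M', M = M' + 1 := ⟨M - 1, by omega⟩
    simp only [Nat.add_sub_cancel]
    rw [Finset.sum_Icc_succ_top (by omega)]
    simp [Nat.choose_eq_zero_of_lt (by omega : M' < M' + 1)]
  rw [← h1, altS, h2, ← Finset.sum_sub_distrib]
  refine Finset.sum_congr rfl fun m hm => ?_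
  simp only [Finset.mem_Icc] at hm
  rw [← pascal_sub M m hm.1 hM]
  ring
lemma isDual_base : IsDual (fun m => 1 / (m : ℚ)) (fun m => 1 / (m : ℚ)) := by
  intro M
  induction M with
  | zero => simp [altS, plainS]
  | succ M ih =>
      have hd := diff_alt (fun m => 1 / (m : ℚ)) (M + 1) (by omega)
      simp only [Nat.add_sub_cancel] at hd
      have hs : ∑ m ∈ Finset.Icc 1 (M + 1),
          (-1 : ℚ) ^ (m - 1) * (((M + 1).choose m : ℚ)) * ((m : ℚ) * (1 / (m : ℚ)))
          = ∑ m ∈ Finset.Icc 1 (M + 1), (-1 : ℚ) ^ (m - 1) * (((M + 1).choose m : ℚ)) := by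
        refine Finset.sum_congr rfl fun m hm => ?_
        simp only [Finset.mem_Icc] at hm
        have : (m : ℚ) ≠ 0 := by exact_mod_cast (by omega : m ≠ 0)
        field_simp
      have ht := alt_tail (M + 1) 1 le_rfl (by omega)
      simp only [Nat.add_sub_cancel, Nat.sub_self, pow_zero, Nat.choose_zero_right,
        Nat.cast_one, one_mul, mul_one] at ht
      rw [hs, ht] at hd
      rw [plainS_succ, ← ih]
      push_cast at hd ⊢
      linear_combination hd

lemma isDual_plus {f g : ℕ → ℚ} (hd : IsDual f g) :
    IsDual (fun m => f m / m) (fun m => plainS g m / m) := by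
  intro M
  induction M with
  | zero => simp [altS, plainS]
  | succ M ih =>
      have hdiff := diff_alt (fun m => f m / m) (M + 1) (by omega)
      simp only [Nat.add_sub_cancel] at hdiff
      have hs : ∑ m ∈ Finset.Icc 1 (M + 1),
          (-1 : ℚ) ^ (m - 1) * (((M + 1).choose m : ℚ)) * ((m : ℚ) * (f m / (m : ℚ)))
          = altS f (M + 1) := by
        rw [altS]
        refine Finset.sum_congr rfl fun m hm => ?_
        simp only [Finset.mem_Icc] at hm
        have : (m : ℚ) ≠ 0 := by exact_mod_cast (by omega : m ≠ 0)
        field_simp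
      rw [hs, hd] at hdiff
      rw [plainS_succ, ← ih]
      show altS (fun m => f m / m) (M + 1)
          = altS (fun m => f m / m) M + plainS g (M + 1) / (((M + 1 : ℕ)) : ℚ)
      linear_combination hdiff

lemma isDual_comma {f g : ℕ → ℚ} (hd : IsDual f g) :
    IsDual (fun m => plainS f m / m) (fun m => g m / m) := by
  intro M
  induction M with
  | zero => simp [altS, plainS]
  | succ M ih =>
      have hdiff := diff_alt (fun m => plainS f m / m) (M + 1) (by omega)
      simp only [Nat.add_sub_cancel] at hdiff
      have hs : ∑ m ∈ Finset.Icc 1 (M + 1),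
          (-1 : ℚ) ^ (m - 1) * (((M + 1).choose m : ℚ)) * ((m : ℚ) * (plainS f m / (m : ℚ)))
          = g (M + 1) := by
        have e1 : ∀ m ∈ Finset.Icc 1 (M + 1),
            (-1 : ℚ) ^ (m - 1) * (((M + 1).choose m : ℚ)) * ((m : ℚ) * (plainS f m / (m : ℚ)))
            = ∑ n ∈ Finset.Icc 1 m, (-1 : ℚ) ^ (m - 1) * (((M + 1).choose m : ℚ)) * f n := by
          intro m hm
          simp only [Finset.mem_Icc] at hm
          have : (m : ℚ) ≠ 0 := by exact_mod_cast (by omega : m ≠ 0)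
          rw [← Finset.mul_sum, ← plainS]
          field_simp
        rw [Finset.sum_congr rfl e1]
        have swap : ∑ m ∈ Finset.Icc 1 (M + 1), ∑ n ∈ Finset.Icc 1 m,
              (-1 : ℚ) ^ (m - 1) * (((M + 1).choose m : ℚ)) * f n
            = ∑ n ∈ Finset.Icc 1 (M + 1), ∑ m ∈ Finset.Icc n (M + 1),
              (-1 : ℚ) ^ (m - 1) * (((M + 1).choose m : ℚ)) * f n := by
          have h1 : ∀ a b : ℕ, Finset.Icc a b = Finset.Ico a (b + 1) := by
            intro a b; ext x; simp [Finset.mem_Icc, Finset.mem_Ico]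
          simp only [h1]
          exact (Finset.sum_Ico_Ico_comm 1 (M + 2)
            (fun n m => (-1 : ℚ) ^ (m - 1) * (((M + 1).choose m : ℚ)) * f n)).symm
        rw [swap]
        have e2 : ∀ n ∈ Finset.Icc 1 (M + 1), ∑ m ∈ Finset.Icc n (M + 1),
              (-1 : ℚ) ^ (m - 1) * (((M + 1).choose m : ℚ)) * f n
            = (-1 : ℚ) ^ (n - 1) * ((M.choose (n - 1) : ℚ)) * f n := by
          intro n hn
          simp only [Finset.mem_Icc] at hn
          rw [← Finset.sum_mul]
          rw [alt_tail (M + 1) n hn.1 hn.2]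
          simp
        rw [Finset.sum_congr rfl e2]
        have := isDual_diff hd (M + 1) (by omega)
        simpa using this
      rw [hs] at hdiff
      rw [plainS_succ, ← ih]
      show altS (fun m => plainS f m / m) (M + 1)
          = altS (fun m => plainS f m / m) M + g (M + 1) / (((M + 1 : ℕ)) : ℚ)
      linear_combination hdiff

lemma psiW_false (w : List Bool) :
    psiW (false :: w) = fun m => plainS (psiW w) m / m := rfl

lemma master (w : List Bool) : IsDual (psiW w) (psiW (w.map not)) := by
  induction w with
  | nil => exact isDual_base
  | cons b w ih =>
      cases b
      · show IsDual (psiW (false :: w)) (psiW (true :: w.map not))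
        exact isDual_comma ih
      · show IsDual (psiW (true :: w)) (psiW (false :: w.map not))
        exact isDual_plus ih
/-- word of a list of exponents, head = first group. -/
def W : List ℕ → List Bool
  | [] => []
  | k :: t => List.replicate (k - 1) true ++
      (match t with
       | [] => []
       | _ :: _ => false :: W t)

@[simp] lemma W_nil : W [] = [] := rfl
lemma W_single (k : ℕ) : W [k] = List.replicate (k - 1) true := by simp [W]
lemma W_cons_cons (k a : ℕ) (t : List ℕ) :
    W (k :: a :: t) = List.replicate (k - 1) true ++ false :: W (a :: t) := rfl

lemma W_append_single (l : List ℕ) (hl : l ≠ []) (k : ℕ) :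
    W (l ++ [k]) = W l ++ false :: List.replicate (k - 1) true := by
  induction l with
  | nil => simp at hl
  | cons a t ih =>
      cases t with
      | nil => simp [W_single, W_cons_cons]
      | cons b t' =>
          have e : (a :: b :: t') ++ [k] = a :: ((b :: t') ++ [k]) := by simp
          have e2 : (b :: t') ++ [k] = b :: (t' ++ [k]) := by simp
          rw [e, e2, W_cons_cons a b (t' ++ [k]), ← e2, ih (by simp), W_cons_cons a b t']
          simp

lemma W_reverse (l : List ℕ) : W l.reverse = (W l).reverse := by
  induction l with
  | nil => simp
  | cons k t ih =>
      cases t with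
      | nil => simp [W_single]
      | cons a t' =>
          rw [List.reverse_cons, W_append_single _ (by simp) k, ih, W_cons_cons]
          simp

lemma W_intercalate (ks : List ℕ) :
    W ks = List.intercalate [false] (ks.map fun a => List.replicate (a - 1) true) := by
  induction ks with
  | nil => simp [List.intercalate]
  | cons k t ih =>
      cases t with
      | nil => simp [W_single, List.intercalate]
      | cons a t' =>
          rw [W_cons_cons, ih]
          show _ = List.intercalate [false]
            (List.replicate (k - 1) true :: (a :: t').map fun a => List.replicate (a - 1) true)
          simp only [List.intercalate, List.map_cons, List.intersperse_cons_cons,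
            List.flatten_cons]
          simp

lemma splitOnP_no_sep {α : Type*} (p : α → Bool) (v : List α) :
    ∀ c ∈ v.splitOnP p, ∀ x ∈ c, ¬ p x := by
  induction v with
  | nil => intro c hc; simp at hc; simp [hc]
  | cons a v ih =>
      intro c hc
      rw [List.splitOnP_cons] at hc
      by_cases h : p a
      · rw [if_pos h] at hc
        rcases List.mem_cons.mp hc with h1 | h1
        · simp [h1]
        · exact ih c h1
      · rw [if_neg h] at hc
        obtain ⟨hd, tl, he⟩ := List.exists_cons_of_ne_nil (List.splitOnP_ne_nil p v)
        rw [he] at hc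
        simp only [List.modifyHead] at hc
        rcases List.mem_cons.mp hc with h1 | h1
        · subst h1
          intro x hx
          rcases List.mem_cons.mp hx with h2 | h2
          · subst h2; exact h
          · exact ih hd (by rw [he]; exact List.mem_cons_self) x h2
        · exact ih c (by rw [he]; exact List.mem_cons_of_mem _ h1)

lemma W_decode (v : List Bool) :
    W ((v.splitOn false).map fun b => b.length + 1) = v := by
  rw [W_intercalate, List.map_map]
  have h1 : ∀ c ∈ v.splitOn false,
      ((fun a => List.replicate (a - 1) true) ∘ fun b => b.length + 1) c = c := by
    intro c hc
    have h2 : ∀ x ∈ c, x = true := by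
      intro x hx
      have := splitOnP_no_sep (· == false) v c hc x hx
      simpa using this
    simp only [Function.comp, Nat.add_sub_cancel]
    exact (List.eq_replicate_iff.mpr ⟨rfl, fun b hb => h2 b hb⟩).symm
  rw [List.map_congr_left h1]
  simpa using List.intercalate_splitOn v false
lemma psiW_replicate_append (j : ℕ) (w : List Bool) (m : ℕ) :
    psiW (List.replicate j true ++ w) m = psiW w m / (m : ℚ) ^ j := by
  induction j with
  | zero => simp
  | succ j ih =>
      rw [List.replicate_succ, List.cons_append]
      show psiW (List.replicate j true ++ w) m / m = _
      rw [ih, pow_succ]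
      ring

lemma Icc_eq_Ioo (m : ℕ) : Finset.Icc 1 m = Finset.Ioo 0 (m + 1) := by
  ext x; simp only [Finset.mem_Icc, Finset.mem_Ioo]; omega

lemma psiW_W (t : List ℕ) : ∀ (k : ℕ), 0 < k → (∀ a ∈ t, 0 < a) → ∀ (m : ℕ),
    psiW (W (k :: t)) m = (1 / (m : ℚ) ^ k) * zetaStarAux (m + 1) t := by
  induction t with
  | nil =>
      intro k hk _ m
      obtain ⟨k', rfl⟩ : ∃ k', k = k' + 1 := ⟨k - 1, by omega⟩
      have e : W [k' + 1] = List.replicate k' true ++ [] := by simp [W_single]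
      rw [e, psiW_replicate_append]
      show (1 / (m : ℚ)) / (m : ℚ) ^ k' = _
      rw [zetaStarAux]
      ring
  | cons a t' ih =>
      intro k hk ht m
      obtain ⟨k', rfl⟩ : ∃ k', k = k' + 1 := ⟨k - 1, by omega⟩
      have e : W ((k' + 1) :: a :: t') = List.replicate k' true ++ (false :: W (a :: t')) := by
        rw [W_cons_cons]; simp
      rw [e, psiW_replicate_append]
      show ((∑ n ∈ Finset.Icc 1 m, psiW (W (a :: t')) n) / m) / (m : ℚ) ^ k' = _
      have inner : ∑ n ∈ Finset.Icc 1 m, psiW (W (a :: t')) n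
          = zetaStarAux (m + 1) (a :: t') := by
        rw [zetaStarAux, Icc_eq_Ioo]
        refine Finset.sum_congr rfl fun n _ => ?_
        exact ih a (ht a (List.mem_cons_self)) (fun b hb => ht b (List.mem_cons_of_mem _ hb)) n
      rw [inner]
      ring

lemma zetaStarAux_eq_sum (N : ℕ) (k : ℕ) (t : List ℕ) (hk : 0 < k) (ht : ∀ a ∈ t, 0 < a) :
    zetaStarAux N (k :: t) = ∑ m ∈ Finset.Ioo 0 N, psiW (W (k :: t)) m := by
  rw [zetaStarAux]
  exact Finset.sum_congr rfl fun m _ => (psiW_W t k hk ht m).symm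

lemma Ioo_eq_Icc (N : ℕ) (hN : 0 < N) : Finset.Ioo 0 N = Finset.Icc 1 (N - 1) := by
  ext x; simp only [Finset.mem_Icc, Finset.mem_Ioo]; omega

/-- Hoffman's duality identity (Theorem 4.1): `ζ⋆_{<N}(k^∨) = H_{<N}(k)` for every
nonempty index `k` and `N > 0`. -/
theorem hoffman_duality (N : ℕ) (hN : 0 < N) (ks : List ℕ) (hne : ks ≠ [])
    (hks : ∀ a ∈ ks, 0 < a) :
    zetaStar N (hoffmanDual ks) = hoffmanSum N ks := by
  obtain ⟨k, t, hrev⟩ : ∃ k t, ks.reverse = k :: t := by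
    rcases h : ks.reverse with _ | ⟨k, t⟩
    · exact absurd (by simpa using congrArg List.reverse h) hne
    · exact ⟨k, t, rfl⟩
  have hpos_rev : ∀ a ∈ ks.reverse, 0 < a := fun a ha => hks a (List.mem_reverse.mp ha)
  set d := hoffmanDual ks with hd
  have hdW : W d = (W ks).map not := by
    rw [hd, hoffmanDual, ← W_intercalate]
    exact W_decode ((W ks).map not)
  have hdne : d ≠ [] := by
    intro hcon
    rw [hd, hoffmanDual, List.map_eq_nil_iff] at hcon
    exact List.splitOnP_ne_nil _ _ hcon
  have hdpos : ∀ a ∈ d, 0 < a := by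
    rw [hd, hoffmanDual]
    intro a ha
    simp only [List.mem_map] at ha
    obtain ⟨b, _, rfl⟩ := ha
    omega
  obtain ⟨k2, t2, hrev2⟩ : ∃ k2 t2, d.reverse = k2 :: t2 := by
    rcases h : d.reverse with _ | ⟨k2, t2⟩
    · exact absurd (by simpa using congrArg List.reverse h) hdne
    · exact ⟨k2, t2, rfl⟩
  have hpos_rev2 : ∀ a ∈ d.reverse, 0 < a := fun a ha => hdpos a (List.mem_reverse.mp ha)
  -- LHS
  have hL : zetaStar N d = plainS (psiW (((W ks).reverse).map not)) (N - 1) := by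
    rw [zetaStar, hrev2, zetaStarAux_eq_sum N k2 t2
      (hpos_rev2 k2 (by rw [hrev2]; exact List.mem_cons_self))
      (fun a ha => hpos_rev2 a (by rw [hrev2]; exact List.mem_cons_of_mem _ ha))]
    rw [← hrev2, W_reverse, hdW, ← List.map_reverse, Ioo_eq_Icc N hN]
    rfl
  -- RHS
  have hR : hoffmanSum N ks = altS (psiW ((W ks).reverse)) (N - 1) := by
    rw [hoffmanSum, hrev]
    show (∑ m ∈ Finset.Ioo 0 N,
        ((-1 : ℚ) ^ (m - 1) * ((N - 1).choose m : ℚ) / (m : ℚ) ^ k) * zetaStarAux (m + 1) t) = _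
    rw [altS, ← W_reverse, hrev, ← Ioo_eq_Icc N hN]
    refine Finset.sum_congr rfl fun m _ => ?_
    rw [psiW_W t k (hpos_rev k (by rw [hrev]; exact List.mem_cons_self))
      (fun a ha => hpos_rev a (by rw [hrev]; exact List.mem_cons_of_mem _ ha)) m]
    ring
  rw [hL, hR, master ((W ks).reverse) (N - 1)]
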